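/- Fix ε > 0. For each directed edge (u,v) ∈ Ē define θ(u,v) = ε·√A(u,v) / (Σ_{(x,y)∈Ē} √A(x,y)). Then: (i) Σ_{(u,v)∈Ē} θ(u,v) = ε; (ii) Σ_{(u,v)∈Ē} (1−α)·A(u,v) / (α·‖A‖₁·θ(u,v)) = (1−α)/(α·ε·‖A‖₁) · (Σ_{(u,v)∈Ē} √A(u,v))²; and (iii) this choice is optimal: for every function θ' : Ē → ℝ with θ'(u,v) > 0 for all (u,v) ∈ Ē and Σ_{(u,v)∈Ē} θ'(u,v) ≤ ε, one has Σ_{(u,v)∈Ē} (1−α)·A(u,v)/(α·‖A‖₁·θ'(u,v)) ≥ (1−α)/(α·ε·‖A‖₁)·(Σ_{(u,v)∈Ē} √A(u,v))². -/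

import Mathlib

open Finset

/-- **EdgePush optimal thresholds for ℓ1-error** (Theorem 5.3 / optimality of θ(u,v)).
With θ(u,v) = ε·√A(u,v) / Σ_{(x,y)∈Ē} √A(x,y): (i) the thresholds sum to ε,
(ii) the running-time bound equals (1-α)/(αε‖A‖₁)·(Σ √A)², and (iii) this choice
minimizes the running-time bound among all positive thresholds summing to at most ε. -/
theorem edgepush_l1_threshold_optimal
    {V : Type*} [Fintype V] [Nonempty V]
    (A : V → V → ℝ)
    (hsymm : ∀ u v : V, A u v = A v u)
    (hnonneg : ∀ u v : V, 0 ≤ A u v)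
    (hdeg : ∀ u : V, 0 < ∑ v, A u v)
    (α : ℝ) (hα : α ∈ Set.Ioo (0 : ℝ) 1)
    (ε : ℝ) (hε : 0 < ε)
    (Ebar : Finset (V × V))
    (hE : Ebar = Finset.univ.filter fun p : V × V => 0 < A p.1 p.2)
    (normA : ℝ) (hnormA : normA = ∑ u, ∑ v, A u v)
    (θ : V × V → ℝ)
    (hθ : ∀ p ∈ Ebar,
      θ p = ε * Real.sqrt (A p.1 p.2) / ∑ q ∈ Ebar, Real.sqrt (A q.1 q.2)) :
    (∑ p ∈ Ebar, θ p = ε) ∧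
    (∑ p ∈ Ebar, (1 - α) * A p.1 p.2 / (α * normA * θ p)
      = (1 - α) / (α * ε * normA) * (∑ p ∈ Ebar, Real.sqrt (A p.1 p.2)) ^ 2) ∧
    (∀ θ' : V × V → ℝ, (∀ p ∈ Ebar, 0 < θ' p) → (∑ p ∈ Ebar, θ' p) ≤ ε →
      (1 - α) / (α * ε * normA) * (∑ p ∈ Ebar, Real.sqrt (A p.1 p.2)) ^ 2
        ≤ ∑ p ∈ Ebar, (1 - α) * A p.1 p.2 / (α * normA * θ' p)) := by
  obtain ⟨hα0, hα1⟩ := hα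
  have hApos : ∀ p ∈ Ebar, 0 < A p.1 p.2 := by
    intro p hp; rw [hE] at hp; exact (Finset.mem_filter.mp hp).2
  -- Ebar is nonempty
  have hEne : Ebar.Nonempty := by
    obtain ⟨u⟩ := (inferInstance : Nonempty V)
    obtain ⟨v, hv⟩ := Finset.exists_lt_of_sum_lt
      (f := fun _ : V => (0:ℝ)) (g := A u) (by simpa using hdeg u)
    exact ⟨(u, v), by rw [hE]; exact Finset.mem_filter.mpr ⟨Finset.mem_univ _, hv.2⟩⟩
  set S : ℝ := ∑ q ∈ Ebar, Real.sqrt (A q.1 q.2) with hSdef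
  have hS : 0 < S := by
    apply Finset.sum_pos' (fun p _ => Real.sqrt_nonneg _)
    obtain ⟨p, hp⟩ := hEne
    exact ⟨p, hp, Real.sqrt_pos.mpr (hApos p hp)⟩
  have hnA : 0 < normA := by
    rw [hnormA]
    exact Finset.sum_pos (fun u _ => hdeg u) Finset.univ_nonempty
  have h1α : 0 < 1 - α := by linarith
  refine ⟨?_, ?_, ?_⟩
  · rw [Finset.sum_congr rfl hθ, ← Finset.sum_div, ← Finset.mul_sum, ← hSdef]
    field_simp
  · rw [sq, Finset.mul_sum, Finset.mul_sum]
    refine Finset.sum_congr rfl fun p hp => ?_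
    have hA := hApos p hp
    have hsq : Real.sqrt (A p.1 p.2) * Real.sqrt (A p.1 p.2) = A p.1 p.2 :=
      Real.mul_self_sqrt (le_of_lt hA)
    have hsqpos : 0 < Real.sqrt (A p.1 p.2) := Real.sqrt_pos.mpr hA
    rw [hθ p hp]
    have h1 : S ≠ 0 := hS.ne'
    have h2 : Real.sqrt (A p.1 p.2) ≠ 0 := hsqpos.ne'
    have h3 : α ≠ 0 := hα0.ne'
    have h4 : normA ≠ 0 := hnA.ne'
    have h5 : ε ≠ 0 := hε.ne'
    field_simp
    linear_combination (-1 : ℝ) * hsq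
  · intro θ' hθ'pos hθ'sum
    have key : S ^ 2 / ε ≤ ∑ p ∈ Ebar, A p.1 p.2 / θ' p := by
      rw [div_le_iff₀ hε]
      have hpt : ∀ p ∈ Ebar, Real.sqrt (A p.1 p.2)
          = Real.sqrt (A p.1 p.2 / θ' p) * Real.sqrt (θ' p) := by
        intro p hp
        rw [← Real.sqrt_mul (div_nonneg (hnonneg _ _) (hθ'pos p hp).le), div_mul_cancel₀]
        exact (hθ'pos p hp).ne'
      calc S ^ 2 = (∑ p ∈ Ebar, Real.sqrt (A p.1 p.2 / θ' p) * Real.sqrt (θ' p)) ^ 2 := by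
            rw [hSdef, Finset.sum_congr rfl hpt]
        _ ≤ (∑ p ∈ Ebar, Real.sqrt (A p.1 p.2 / θ' p) ^ 2)
              * ∑ p ∈ Ebar, Real.sqrt (θ' p) ^ 2 :=
            Finset.sum_mul_sq_le_sq_mul_sq _ _ _
        _ = (∑ p ∈ Ebar, A p.1 p.2 / θ' p) * ∑ p ∈ Ebar, θ' p := by
            congr 1
            · exact Finset.sum_congr rfl fun p hp => Real.sq_sqrt
                (div_nonneg (hnonneg _ _) (hθ'pos p hp).le)
            · exact Finset.sum_congr rfl fun p hp => Real.sq_sqrt (hθ'pos p hp).le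
        _ ≤ (∑ p ∈ Ebar, A p.1 p.2 / θ' p) * ε := by
            apply mul_le_mul_of_nonneg_left hθ'sum
            exact Finset.sum_nonneg fun p hp =>
              div_nonneg (hnonneg _ _) (hθ'pos p hp).le
    have hre : ∑ p ∈ Ebar, (1 - α) * A p.1 p.2 / (α * normA * θ' p)
        = (1 - α) / (α * normA) * ∑ p ∈ Ebar, A p.1 p.2 / θ' p := by
      rw [Finset.mul_sum]
      refine Finset.sum_congr rfl fun p hp => ?_
      have := (hθ'pos p hp).ne'
      field_simp
    have hle : (1 - α) / (α * ε * normA) * S ^ 2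
        = (1 - α) / (α * normA) * (S ^ 2 / ε) := by
      field_simp
    rw [hre, hle]
    exact mul_le_mul_of_nonneg_left key (by positivity)
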